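/- For every n ≥ 2 and every pair of indices 1 ≤ i < j ≤ n, the element 1 − (ij) of the complex group algebra ℂ[S_n], where (ij) is the transposition exchanging i and j, is a Lie element with respect to the permutation representation: 1 − (ij) ∈ L_n. -/

import Mathlib

theorem alt_expand {R M N : Type*} [CommRing R] [AddCommGroup M] [Module R M]
    [AddCommGroup N] [Module R N] {m : ℕ} (f : M [⋀^Fin m]→ₗ[R] N)
    (v : Fin m → M) (c : Fin m → R) (u : M) :
    f (fun p => v p + c p • u) = f v + ∑ p : Fin m, f (Function.update v p (c p • u)) := by
  set w : Fin m → M := fun p => c p • u with hw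
  have h0 : (fun p => v p + c p • u) = w + v := by funext p; simp [hw, add_comm]
  have hadd := f.toMultilinearMap.map_add_univ w v
  simp only [AlternatingMap.coe_multilinearMap] at hadd
  rw [h0, hadd]
  have h2 : ∀ s : Finset (Fin m), ¬ s.card ≤ 1 → f (s.piecewise w v) = 0 := by
    intro s hs
    rw [not_le] at hs
    obtain ⟨p, hp, q, hq, hpq⟩ := Finset.one_lt_card.mp hs
    set g := s.piecewise w v with hg
    have hgp : g p = c p • u := by simp [hg, Finset.piecewise_eq_of_mem _ _ _ hp, hw]
    have hgq : g q = c q • u := by simp [hg, Finset.piecewise_eq_of_mem _ _ _ hq, hw]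
    have e1 : g = Function.update g p (c p • u) := by rw [← hgp, Function.update_eq_self]
    have e2 : Function.update (Function.update g p u) q (c q • u) = Function.update g p u := by
      funext k
      rcases eq_or_ne k q with rfl | hk
      · rw [Function.update_self, Function.update_of_ne hpq.symm, hgq]
      · rw [Function.update_of_ne hk]
    have hval : Function.update (Function.update g p u) q u p
        = Function.update (Function.update g p u) q u q := by
      rw [Function.update_of_ne hpq, Function.update_self, Function.update_self]
    calc f g = f (Function.update g p (c p • u)) := by rw [← e1]
      _ = c p • f (Function.update g p u) := f.map_update_smul _ _ _ _
      _ = c p • f (Function.update (Function.update g p u) q (c q • u)) := by rw [e2]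
      _ = c p • (c q • f (Function.update (Function.update g p u) q u)) := by
          rw [f.map_update_smul]
      _ = 0 := by rw [f.map_eq_zero_of_eq _ hval hpq]; simp
  rw [← Finset.sum_filter_add_sum_filter_not Finset.univ (fun s => s.card ≤ 1)]
  have hz : ∑ s ∈ Finset.univ.filter (fun s : Finset (Fin m) => ¬ s.card ≤ 1),
      f (s.piecewise w v) = 0 := by
    apply Finset.sum_eq_zero
    intro s hs
    exact h2 s (Finset.mem_filter.mp hs).2
  rw [hz, add_zero]
  have hset : Finset.univ.filter (fun s : Finset (Fin m) => s.card ≤ 1)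
      = insert ∅ (Finset.univ.image fun p : Fin m => ({p} : Finset (Fin m))) := by
    ext s
    simp only [Finset.mem_filter, Finset.mem_univ, true_and, Finset.mem_insert,
      Finset.mem_image]
    constructor
    · intro hs
      interval_cases h : s.card
      · left; exact Finset.card_eq_zero.mp h
      · right
        obtain ⟨p, rfl⟩ := Finset.card_eq_one.mp h
        exact ⟨p, by simp⟩
    · rintro (rfl | ⟨p, -, rfl⟩) <;> simp
  rw [hset, Finset.sum_insert (by simp), Finset.sum_image (by intro a _ b _ h; exact Finset.singleton_injective h)]
  simp [Finset.piecewise_singleton, hw]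


/-- The wedge product `v₁ ∧ ⋯ ∧ vₘ` of a family of vectors, as an element of the `m`-th
exterior power `⋀[k]^m V`. -/
noncomputable def wedge (k : Type*) [Field k] (V : Type*) [AddCommGroup V] [Module k V]
    (m : ℕ) (v : Fin m → V) : ⋀[k]^m V :=
  ⟨ExteriorAlgebra.ιMulti k m v, ExteriorAlgebra.ιMulti_range k m (Set.mem_range_self v)⟩

theorem wedge_span (k : Type*) [Field k] (V : Type*) [AddCommGroup V] [Module k V] (m : ℕ) :
    Submodule.span k (Set.range (wedge k V m)) = ⊤ := by
  apply Submodule.map_injective_of_injective (⋀[k]^m V).injective_subtype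
  rw [Submodule.map_span, Submodule.map_top, Submodule.range_subtype]
  have : (⋀[k]^m V).subtype '' Set.range (wedge k V m)
      = Set.range (ExteriorAlgebra.ιMulti k m (M := V)) := by
    ext x
    constructor
    · rintro ⟨y, ⟨v, rfl⟩, rfl⟩; exact ⟨v, rfl⟩
    · rintro ⟨v, rfl⟩; exact ⟨wedge k V m v, ⟨v, rfl⟩, rfl⟩
  rw [this]
  exact ExteriorAlgebra.ιMulti_span_fixedDegree k m


/-- The permutation representation of the symmetric group `S_n` on `ℂⁿ`: a permutation `σ`
sends the basis vector `xᵢ` to `x_{σ i}`, i.e. it acts on coordinate functions by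
`(σ · v) i = v (σ⁻¹ i)`. -/
noncomputable def permRep (n : ℕ) : Representation ℂ (Equiv.Perm (Fin n)) (Fin n → ℂ) where
  toFun σ := LinearMap.funLeft ℂ ℂ ⇑σ⁻¹
  map_one' := by ext v i; simp [LinearMap.funLeft]
  map_mul' σ τ := by ext v i; simp [LinearMap.funLeft]

/-- For `n ≥ 2` and any pair of indices `i < j`, the element `1 - (ij)` of the complex group
algebra `ℂ[S_n]` is a Lie element with respect to the permutation representation:
`A_m(1 - (ij)) = B_m(1 - (ij))` for all `m = 0, 1, …, n`. -/
theorem statement8 (n : ℕ) (hn : 2 ≤ n) (i j : Fin n) (hij : i < j)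
    (A B : (m : ℕ) → Equiv.Perm (Fin n) → Module.End ℂ (⋀[ℂ]^m (Fin n → ℂ)))
    (hA : ∀ (m : ℕ) (σ : Equiv.Perm (Fin n)) (v : Fin m → (Fin n → ℂ)),
      A m σ (wedge ℂ (Fin n → ℂ) m v) = wedge ℂ (Fin n → ℂ) m fun p => permRep n σ (v p))
    (hB : ∀ (m : ℕ) (σ : Equiv.Perm (Fin n)) (v : Fin m → (Fin n → ℂ)),
      B m σ (wedge ℂ (Fin n → ℂ) m v) =
        ∑ p : Fin m, wedge ℂ (Fin n → ℂ) m (Function.update v p (permRep n σ (v p))))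
    (Ahat Bhat : (m : ℕ) →
      MonoidAlgebra ℂ (Equiv.Perm (Fin n)) →ₗ[ℂ] Module.End ℂ (⋀[ℂ]^m (Fin n → ℂ)))
    (hAhat : ∀ (m : ℕ) (σ : Equiv.Perm (Fin n)), Ahat m (MonoidAlgebra.single σ 1) = A m σ)
    (hBhat : ∀ (m : ℕ) (σ : Equiv.Perm (Fin n)), Bhat m (MonoidAlgebra.single σ 1) = B m σ) :
    ∀ m ≤ n,
      Ahat m (1 - MonoidAlgebra.single (Equiv.swap i j) 1) =
        Bhat m (1 - MonoidAlgebra.single (Equiv.swap i j) 1) := by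
  intro m _
  set τ := Equiv.swap i j with hτ
  have hone : (1 : MonoidAlgebra ℂ (Equiv.Perm (Fin n)))
      = MonoidAlgebra.single (1 : Equiv.Perm (Fin n)) 1 := rfl
  rw [hone, map_sub, map_sub, hAhat, hAhat, hBhat, hBhat]
  -- key vectors
  have hij' : i ≠ j := ne_of_lt hij
  set u : Fin n → ℂ := fun k => if k = i then 1 else if k = j then -1 else 0 with hu
  have hperm : ∀ w : Fin n → ℂ, permRep n τ w = w + (w j - w i) • u := by
    intro w
    funext k
    have : permRep n τ w k = w (τ⁻¹ k) := rfl
    rw [this]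
    simp only [Pi.add_apply, Pi.smul_apply, smul_eq_mul, hu, hτ, Equiv.swap_inv]
    rcases eq_or_ne k i with rfl | hki
    · rw [Equiv.swap_apply_left, if_pos rfl]; ring
    · rcases eq_or_ne k j with rfl | hkj
      · rw [Equiv.swap_apply_right, if_neg hij'.symm, if_pos rfl]; ring
      · rw [Equiv.swap_apply_of_ne_of_ne hki hkj, if_neg hki, if_neg hkj]; ring
  refine LinearMap.ext_on (wedge_span ℂ (Fin n → ℂ) m) ?_
  rintro x ⟨v, rfl⟩
  set c : Fin m → ℂ := fun p => v p j - v p i with hc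
  simp only [LinearMap.sub_apply, hA, hB]
  have hone' : ∀ p, permRep n 1 (v p) = v p := by
    intro p; rw [map_one]; rfl
  apply Subtype.ext
  set f := ExteriorAlgebra.ιMulti ℂ m (M := (Fin n → ℂ)) with hf
  have hcoe : ∀ w : Fin m → (Fin n → ℂ), (wedge ℂ (Fin n → ℂ) m w : ExteriorAlgebra ℂ (Fin n → ℂ)) = f w := fun _ => rfl
  have key := alt_expand f v c u
  have hvp : (fun p => permRep n τ (v p)) = fun p => v p + c p • u := by
    funext p; rw [hperm (v p)]
  have hupd : ∀ p : Fin m, f (Function.update v p (permRep n τ (v p)))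
      = f v + f (Function.update v p (c p • u)) := by
    intro p
    rw [hperm (v p), f.map_update_add, Function.update_eq_self]
  push_cast [Submodule.coe_sub, AddSubmonoidClass.coe_finset_sum, hcoe]
  simp only [hone', Function.update_eq_self, hvp, key, Finset.sum_const, Finset.card_univ,
    Fintype.card_fin, hupd, Finset.sum_add_distrib]
  abel
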